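/- Let T be a tree on vertex set [n] with q-Laplacian L^q_T, and let λ ⊢ n and 0 ≤ r ≤ n. Writing d_λ(xI - L^q_T) = Σ_{r=0}^n (-1)^r c_{λ,r}(q) x^{n-r}, the coefficient satisfies c_{λ,r}(q) = Σ_{j=0}^{⌊r/2⌋} χ_λ(j) · m_{r,j}(q), where m_{r,j}(q) = Σ_{|B|=r} Σ_{M ∈ M_j(B)} q^{2j} Π_{v ∈ B \ V(M)} (1 + q^2(deg(v) - 1)), the inner sums being over j-edge matchings M of the forest induced by T on B. -/

import Mathlib

open Finset Polynomial

noncomputable def qLap {n : ℕ} (G : SimpleGraph (Fin n)) [DecidableRel G.Adj]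
    {R : Type*} [CommRing R] (q : R) : Matrix (Fin n) (Fin n) R :=
  Matrix.of fun i j =>
    if i = j then 1 + q ^ 2 * ((G.degree i : R) - 1)
    else if G.Adj i j then -q else 0

/-- Irreducible character of `Sₙ` indexed by the partition `lam`, via the
Frobenius character formula. -/
noncomputable def chiPart (n : ℕ) (lam : Fin n → ℕ) (σ : Equiv.Perm (Fin n)) : ℤ :=
  MvPolynomial.coeff (Finsupp.equivFunOnFinite.symm fun i => lam i + (n - 1 - (i : ℕ)))
    ((∏ i : Fin n, ∏ j ∈ Finset.univ.filter (fun j => i < j),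
        (MvPolynomial.X i - MvPolynomial.X j : MvPolynomial (Fin n) ℤ)) *
      ((σ.cycleType.map fun c =>
          ∑ i : Fin n, (MvPolynomial.X i : MvPolynomial (Fin n) ℤ) ^ c).prod *
        (∑ i : Fin n, (MvPolynomial.X i : MvPolynomial (Fin n) ℤ)) ^ (n - σ.cycleType.sum)))

noncomputable def imman {n : ℕ} {R : Type*} [CommRing R] (χ : Equiv.Perm (Fin n) → R)
    (A : Matrix (Fin n) (Fin n) R) : R :=
  ∑ σ : Equiv.Perm (Fin n), χ σ * ∏ i, A i (σ i)

open scoped Classical in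
/-- `M_j(B)`: the `j`-edge matchings of the forest induced by `G` on `B`,
viewed as `j`-sets of edges of `G` with all endpoints in `B` and pairwise
disjoint. -/
noncomputable def bMatchings {n : ℕ} (G : SimpleGraph (Fin n)) [DecidableRel G.Adj]
    (B : Finset (Fin n)) (j : ℕ) : Finset (Finset (Sym2 (Fin n))) :=
  G.edgeFinset.powerset.filter fun M =>
    M.card = j ∧ (∀ e ∈ M, ∀ v, v ∈ e → v ∈ B) ∧
      ∀ e ∈ M, ∀ f ∈ M, e ≠ f → ∀ v : Fin n, ¬(v ∈ e ∧ v ∈ f)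

open scoped Classical in
/-- `m_{B,j}(q) = ∑_{M ∈ M_j(B)} q^{2j} ∏_{v ∈ B \ V(M)} (1 + q²(deg v - 1))`. -/
noncomputable def mBj {n : ℕ} (G : SimpleGraph (Fin n)) [DecidableRel G.Adj]
    (B : Finset (Fin n)) (j : ℕ) : Polynomial ℝ :=
  ∑ M ∈ bMatchings G B j,
    X ^ (2 * j) *
      ∏ v ∈ B.filter (fun v => ¬∃ e ∈ M, v ∈ e),
        (1 + X ^ 2 * ((G.degree v : Polynomial ℝ) - 1))

open scoped Classical in
/-- `m_{r,j}(q) = ∑_{|B| = r} m_{B,j}(q)`. -/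
noncomputable def mrj {n : ℕ} (G : SimpleGraph (Fin n)) [DecidableRel G.Adj]
    (r j : ℕ) : Polynomial ℝ :=
  ∑ B ∈ Finset.univ.powerset.filter (fun B : Finset (Fin n) => B.card = r), mBj G B j


lemma invol_of_moves {n : ℕ} {G : SimpleGraph (Fin n)} (hac : G.IsAcyclic)
    (σ : Equiv.Perm (Fin n)) (hmove : ∀ i, σ i = i ∨ G.Adj i (σ i)) (i : Fin n) :
    σ (σ i) = i := by
  by_contra h2
  have hi : σ i ≠ i := fun h => h2 (by rw [h, h])
  have hmoved : ∀ m, σ (σ^[m] i) ≠ σ^[m] i := by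
    intro m hm
    apply hi
    refine σ.injective.iterate m ?_
    rw [← Function.iterate_succ_apply, Function.iterate_succ_apply']
    exact hm
  have hadj : ∀ m, G.Adj (σ^[m] i) (σ^[m+1] i) := by
    intro m
    rw [Function.iterate_succ_apply']
    rcases hmove (σ^[m] i) with h | h
    · exact absurd h (hmoved m)
    · exact h
  set k := Function.minimalPeriod σ i with hk
  have hper : Function.IsPeriodicPt (⇑σ) (orderOf σ) i := by
    show Function.IsFixedPt _ _
    show σ^[orderOf σ] i = i
    rw [Equiv.Perm.iterate_eq_pow, pow_orderOf_eq_one]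
    rfl
  have hkpos : 0 < k := hper.minimalPeriod_pos (orderOf_pos σ)
  have hkk : σ^[k] i = i := Function.iterate_minimalPeriod
  have hk1 : k ≠ 1 := by intro h; apply hi; rw [h] at hkk; simpa using hkk
  have hk2 : k ≠ 2 := by
    intro h; apply h2; rw [h] at hkk
    simpa [Function.iterate_succ_apply'] using hkk
  have hk3 : 3 ≤ k := by omega
  have hwalk : ∀ m : ℕ, ∃ p : G.Walk (σ i) (σ^[m+1] i),
      p.support = (List.range (m+1)).map (fun t => σ^[t+1] i) := by
    intro m
    induction m with
    | zero => exact ⟨SimpleGraph.Walk.nil, rfl⟩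
    | succ m ih =>
      obtain ⟨p, hp⟩ := ih
      refine ⟨p.concat (hadj (m+1)), ?_⟩
      rw [SimpleGraph.Walk.support_concat, hp,
        show List.range (m+1+1) = List.range (m+1) ++ [m+1] from List.range_succ,
        List.map_append]
      rfl
  obtain ⟨p, hp⟩ := hwalk (k - 2)
  have hadj' : G.Adj (σ^[k-2+1] i) i := by
    have h := hadj (k-2+1)
    rw [show (k-2+1)+1 = k by omega, hkk] at h
    exact h
  set q := p.concat hadj' with hqdef
  have hq : q.support = ((List.range (k-1)).map (fun t => σ^[t+1] i)) ++ [i] := by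
    rw [hqdef, SimpleGraph.Walk.support_concat, hp, show k-2+1 = k-1 by omega]
  have hnodup : q.support.Nodup := by
    rw [hq, List.nodup_append]
    refine ⟨?_, List.nodup_singleton i, ?_⟩
    · refine List.Nodup.map_on ?_ List.nodup_range
      intro t ht s hs hts
      rw [List.mem_range] at ht hs
      have := (Function.iterate_eq_iterate_iff_of_lt_minimalPeriod
        (by omega : t+1 < k) (by omega : s+1 < k)).mp hts
      omega
    · intro a ha b hb hab
      rw [← hab] at hb
      rw [List.mem_singleton] at hb
      rw [List.mem_map] at ha
      obtain ⟨t, ht, hat⟩ := ha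
      rw [List.mem_range] at ht
      have h0 : σ^[t+1] i = σ^[0] i := by rw [hat, hb]; rfl
      have := (Function.iterate_eq_iterate_iff_of_lt_minimalPeriod
        (by omega : t+1 < k) (by omega : (0:ℕ) < k)).mp h0
      omega
  have hadj0 : G.Adj i (σ i) := by
    rcases hmove i with h | h
    · exact absurd h hi
    · exact h
  have hpath1 : (SimpleGraph.Walk.cons hadj0 SimpleGraph.Walk.nil).IsPath := by
    simp [hadj0.ne]
  have hpath2 : q.reverse.IsPath := by
    rw [SimpleGraph.Walk.isPath_def, SimpleGraph.Walk.support_reverse]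
    exact List.nodup_reverse.mpr hnodup
  have hPeq := SimpleGraph.isAcyclic_iff_path_unique.mp hac
    ⟨SimpleGraph.Walk.cons hadj0 SimpleGraph.Walk.nil, hpath1⟩ ⟨q.reverse, hpath2⟩
  have hweq : (SimpleGraph.Walk.cons hadj0 SimpleGraph.Walk.nil) = q.reverse :=
    congrArg Subtype.val hPeq
  have hlen : (SimpleGraph.Walk.cons hadj0 SimpleGraph.Walk.nil).support.length
      = q.reverse.support.length := by rw [hweq]
  rw [SimpleGraph.Walk.support_cons, SimpleGraph.Walk.support_nil,
    SimpleGraph.Walk.support_reverse, List.length_reverse, hq] at hlen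
  simp at hlen
  omega

lemma cycleType_of_invol {n : ℕ} (σ : Equiv.Perm (Fin n)) (hinv : ∀ i, σ (σ i) = i) :
    σ.cycleType = Multiset.replicate (σ.support.card / 2) 2 ∧
      2 * (σ.support.card / 2) = σ.support.card := by
  have hsq : σ ^ 2 = 1 := by
    ext v
    simp [pow_two, hinv v]
  have h2 : ∀ a ∈ σ.cycleType, a = 2 := by
    intro a ha
    have hdvd : a ∣ 2 := by
      have h1 : a ∣ σ.cycleType.lcm := Multiset.dvd_lcm ha
      rw [Equiv.Perm.lcm_cycleType] at h1
      exact h1.trans (orderOf_dvd_of_pow_eq_one hsq)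
    have h1 := Equiv.Perm.two_le_of_mem_cycleType ha
    have h2 := Nat.le_of_dvd two_pos hdvd
    omega
  have hrep : σ.cycleType = Multiset.replicate σ.cycleType.card 2 :=
    Multiset.eq_replicate.mpr ⟨rfl, h2⟩
  have hsum : σ.cycleType.sum = σ.support.card := Equiv.Perm.sum_cycleType σ
  rw [hrep] at hsum
  rw [Multiset.sum_replicate, smul_eq_mul] at hsum
  have hcard : σ.cycleType.card = σ.support.card / 2 := by omega
  rw [hcard] at hrep
  exact ⟨hrep, by omega⟩

-- coefficient of products of (X - C a)
lemma prod_X_sub_C_coeff' {R : Type*} [CommRing R] {ι : Type*} (s : Finset ι) (a : ι → R)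
    {k : ℕ} (h : k ≤ s.card) :
    (∏ i ∈ s, (X - C (a i))).coeff k
      = (-1) ^ (s.card - k) * ∑ t ∈ s.powersetCard (s.card - k), ∏ i ∈ t, a i := by
  have : ∀ i ∈ s, X - C (a i) = X + C (-(a i)) := by intro i _; rw [map_neg]; ring
  rw [Finset.prod_congr rfl this, Finset.prod_X_add_C_coeff s (fun i => -(a i)) h]
  rw [Finset.mul_sum]
  refine Finset.sum_congr rfl fun t ht => ?_
  rw [Finset.prod_congr rfl (fun i (_ : i ∈ t) => (neg_one_mul (a i)).symm),
    Finset.prod_mul_distrib, Finset.prod_const]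
  congr 2
  rw [Finset.mem_powersetCard] at ht
  rw [ht.2]

-- natDegree of such product
lemma prod_X_sub_C_natDegree {R : Type*} [CommRing R] [Nontrivial R] {ι : Type*} (s : Finset ι)
    (a : ι → R) : (∏ i ∈ s, (X - C (a i))).natDegree = s.card := by
  rw [Polynomial.natDegree_prod_of_monic _ _ (fun i _ => Polynomial.monic_X_sub_C (a i))]
  simp [Polynomial.natDegree_X_sub_C]

section matchstuff

open scoped Classical

variable {n : ℕ} (G : SimpleGraph (Fin n)) [DecidableRel G.Adj]

/-- matching predicate -/
def IsMatch (M : Finset (Sym2 (Fin n))) : Prop :=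
  M ⊆ G.edgeFinset ∧ ∀ e ∈ M, ∀ f ∈ M, e ≠ f → ∀ v : Fin n, ¬(v ∈ e ∧ v ∈ f)

variable {G}

noncomputable def vtx (M : Finset (Sym2 (Fin n))) : Finset (Fin n) :=
  Finset.univ.filter (fun v => ∃ e ∈ M, v ∈ e)

lemma mem_vtx {M : Finset (Sym2 (Fin n))} {v : Fin n} :
    v ∈ vtx M ↔ ∃ w, s(v, w) ∈ M := by
  simp only [vtx, mem_filter, mem_univ, true_and]
  constructor
  · rintro ⟨e, he, hv⟩
    obtain ⟨w, rfl⟩ := Sym2.mem_iff_exists.mp hv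
    exact ⟨w, he⟩
  · rintro ⟨w, hw⟩
    exact ⟨s(v, w), hw, Sym2.mem_mk_left _ _⟩

lemma match_unique {M : Finset (Sym2 (Fin n))} (hM : IsMatch G M) {v w w' : Fin n}
    (h : s(v, w) ∈ M) (h' : s(v, w') ∈ M) : w = w' := by
  by_cases he : s(v, w) = s(v, w')
  · exact Sym2.congr_right.mp he
  · exact absurd ⟨Sym2.mem_mk_left _ _, Sym2.mem_mk_left _ _⟩ (hM.2 _ h _ h' he v)

lemma card_filter_mem_edge {e : Sym2 (Fin n)} (he : e ∈ G.edgeFinset) :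
    (Finset.univ.filter (· ∈ e)).card = 2 := by
  induction e with
  | _ a b =>
    have hab : a ≠ b := (G.mem_edgeSet.mp (SimpleGraph.mem_edgeFinset.mp he)).ne
    have h2 : Finset.univ.filter (· ∈ s(a, b)) = {a, b} := by
      ext w; simp [Sym2.mem_iff]
    rw [h2, card_insert_of_notMem (by simpa using hab), card_singleton]

lemma card_vtx {M : Finset (Sym2 (Fin n))} (hM : IsMatch G M) :
    (vtx M).card = 2 * M.card := by
  have hV : vtx M = M.biUnion (fun e => Finset.univ.filter (· ∈ e)) := by
    ext v; simp [vtx, mem_biUnion]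
  rw [hV, card_biUnion]
  · rw [Finset.sum_congr rfl (fun e he => card_filter_mem_edge (hM.1 he)), Finset.sum_const,
      smul_eq_mul, mul_comm]
  · intro e he f hf hef
    simp only [Function.onFun]
    rw [Finset.disjoint_filter]
    intro v _ hv hv'
    exact hM.2 _ he _ hf hef v ⟨hv, hv'⟩

noncomputable def mfun (M : Finset (Sym2 (Fin n))) : Fin n → Fin n :=
  fun v => if h : ∃ w, s(v, w) ∈ M then h.choose else v

lemma mfun_eq {M : Finset (Sym2 (Fin n))} (hM : IsMatch G M) {v w : Fin n}
    (h : s(v, w) ∈ M) : mfun M v = w := by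
  have hex : ∃ w, s(v, w) ∈ M := ⟨w, h⟩
  rw [mfun, dif_pos hex]
  exact match_unique hM hex.choose_spec h

lemma mfun_eq_self {M : Finset (Sym2 (Fin n))} {v : Fin n}
    (h : ¬∃ w, s(v, w) ∈ M) : mfun M v = v := dif_neg h

lemma mfun_invol {M : Finset (Sym2 (Fin n))} (hM : IsMatch G M) :
    Function.Involutive (mfun M) := by
  intro v
  by_cases h : ∃ w, s(v, w) ∈ M
  · obtain ⟨w, hw⟩ := h
    rw [mfun_eq hM hw]
    exact mfun_eq hM (by rwa [Sym2.eq_swap])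
  · rw [mfun_eq_self h, mfun_eq_self h]

noncomputable def mperm (M : Finset (Sym2 (Fin n))) (hM : IsMatch G M) : Equiv.Perm (Fin n) :=
  (mfun_invol hM).toPerm

lemma mperm_apply {M : Finset (Sym2 (Fin n))} (hM : IsMatch G M) (v : Fin n) :
    mperm M hM v = mfun M v := rfl

lemma support_mperm {M : Finset (Sym2 (Fin n))} (hM : IsMatch G M) :
    (mperm M hM).support = vtx M := by
  ext v
  rw [Equiv.Perm.mem_support, mem_vtx, mperm_apply]
  constructor
  · intro h
    by_contra hc
    exact h (mfun_eq_self hc)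
  · rintro ⟨w, hw⟩
    rw [mfun_eq hM hw]
    intro h
    exact (G.mem_edgeSet.mp (SimpleGraph.mem_edgeFinset.mp (hM.1 hw))).ne h.symm

section invside

variable {σ : Equiv.Perm (Fin n)} (hinv : ∀ i, σ (σ i) = i)
  (hadj : ∀ i, σ i ≠ i → G.Adj i (σ i))

noncomputable def medges (σ : Equiv.Perm (Fin n)) : Finset (Sym2 (Fin n)) :=
  σ.support.image (fun i => s(i, σ i))

include hinv in
lemma edge_eq_of_mem {i v : Fin n} (hi : i ∈ σ.support) (hv : v ∈ s(i, σ i)) :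
    s(v, σ v) = s(i, σ i) := by
  rw [Sym2.mem_iff] at hv
  rcases hv with rfl | rfl
  · rfl
  · rw [hinv i, Sym2.eq_swap]

include hinv hadj in
lemma isMatch_medges : IsMatch G (medges σ) := by
  constructor
  · intro e he
    rw [medges, mem_image] at he
    obtain ⟨i, hi, rfl⟩ := he
    rw [SimpleGraph.mem_edgeFinset, SimpleGraph.mem_edgeSet]
    exact hadj i (Equiv.Perm.mem_support.mp hi)
  · intro e he f hf hef v ⟨hve, hvf⟩
    rw [medges, mem_image] at he hf
    obtain ⟨i, hi, rfl⟩ := he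
    obtain ⟨k, hk, rfl⟩ := hf
    exact hef ((edge_eq_of_mem hinv hi hve).symm.trans (edge_eq_of_mem hinv hk hvf))

include hinv in
lemma mem_medges {v w : Fin n} : s(v, w) ∈ medges σ ↔ σ v ≠ v ∧ w = σ v := by
  rw [medges, mem_image]
  constructor
  · rintro ⟨i, hi, he⟩
    rw [Equiv.Perm.mem_support] at hi
    rw [Sym2.eq_iff] at he
    rcases he with ⟨rfl, rfl⟩ | ⟨rfl, rfl⟩
    · exact ⟨hi, rfl⟩
    · exact ⟨by rw [hinv]; exact fun h => hi h.symm, by rw [hinv]⟩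
  · rintro ⟨hv, rfl⟩
    exact ⟨v, Equiv.Perm.mem_support.mpr (fun h => hv h), rfl⟩

include hinv in
lemma vtx_medges : vtx (medges σ) = σ.support := by
  ext v
  rw [mem_vtx, Equiv.Perm.mem_support]
  constructor
  · rintro ⟨w, hw⟩
    exact ((mem_medges hinv).mp hw).1 |>.imp fun h => h  -- σ v ≠ v
  · intro h
    exact ⟨σ v, (mem_medges hinv).mpr ⟨h, rfl⟩⟩

include hinv hadj in
lemma mperm_medges : mperm (medges σ) (isMatch_medges hinv hadj) = σ := by
  refine Equiv.ext fun v => ?_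
  rw [mperm_apply]
  by_cases h : σ v = v
  · rw [mfun_eq_self, h]
    rintro ⟨w, hw⟩
    exact ((mem_medges hinv).mp hw).1 h
  · exact mfun_eq (isMatch_medges hinv hadj) ((mem_medges hinv).mpr ⟨h, rfl⟩)

include hinv hadj in
lemma card_medges : 2 * (medges σ).card = σ.support.card := by
  rw [← card_vtx (isMatch_medges hinv hadj), vtx_medges hinv]

end invside

lemma medges_mperm {M : Finset (Sym2 (Fin n))} (hM : IsMatch G M) :
    medges (mperm M hM) = M := by
  have hinv' : ∀ v, mperm M hM (mperm M hM v) = v := mfun_invol hM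
  ext e
  induction e with
  | _ v w =>
    rw [mem_medges hinv', mperm_apply]
    constructor
    · rintro ⟨hv, rfl⟩
      by_cases h : ∃ w', s(v, w') ∈ M
      · obtain ⟨w', hw'⟩ := h
        rwa [mfun_eq hM hw']
      · exact absurd (mfun_eq_self h) hv
    · intro h
      have hne : mfun M v ≠ v := by
        intro hc
        have := mfun_eq hM h
        rw [hc] at this
        exact (G.mem_edgeSet.mp (SimpleGraph.mem_edgeFinset.mp (hM.1 h))).ne this
      exact ⟨hne, (mfun_eq hM h).symm⟩

lemma mperm_adj {M : Finset (Sym2 (Fin n))} (hM : IsMatch G M) (v : Fin n)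
    (h : mperm M hM v ≠ v) : G.Adj v (mperm M hM v) := by
  have hv : v ∈ vtx M := by
    rw [← support_mperm hM]
    exact Equiv.Perm.mem_support.mpr h
  obtain ⟨w, hw⟩ := mem_vtx.mp hv
  rw [mperm_apply, mfun_eq hM hw]
  exact G.mem_edgeSet.mp (SimpleGraph.mem_edgeFinset.mp (hM.1 hw))

lemma mperm_invol {M : Finset (Sym2 (Fin n))} (hM : IsMatch G M) (v : Fin n) :
    mperm M hM (mperm M hM v) = v := mfun_invol hM v
noncomputable def mpermT (G : SimpleGraph (Fin n)) [DecidableRel G.Adj]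
    (M : Finset (Sym2 (Fin n))) : Equiv.Perm (Fin n) :=
  if h : IsMatch G M then mperm M h else 1

lemma mem_bMatchings {B : Finset (Fin n)} {j : ℕ} {M : Finset (Sym2 (Fin n))} :
    M ∈ bMatchings G B j ↔ M ⊆ G.edgeFinset ∧ M.card = j ∧ (∀ e ∈ M, ∀ v ∈ e, v ∈ B) ∧
      ∀ e ∈ M, ∀ f ∈ M, e ≠ f → ∀ v : Fin n, ¬(v ∈ e ∧ v ∈ f) := by
  rw [bMatchings, Finset.mem_filter, Finset.mem_powerset]

lemma filter_not_vtx (B : Finset (Fin n)) (M : Finset (Sym2 (Fin n))) :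
    B.filter (fun v => ¬∃ e ∈ M, v ∈ e) = B \ vtx M := by
  ext v
  simp [vtx, Finset.mem_sdiff, Finset.mem_filter]

lemma matching_sum_eq (hG : G.IsAcyclic) (r j : ℕ) (h2j : 2 * j ≤ r)
    {Mo : Type*} [CommSemiring Mo] (f : Fin n → Mo) :
    ∑ τ ∈ Finset.univ.filter
        (fun τ : Equiv.Perm (Fin n) =>
          (∀ i, τ i = i ∨ G.Adj i (τ i)) ∧ τ.support.card = 2 * j),
      ∑ S ∈ (τ.supportᶜ).powersetCard (r - 2 * j), ∏ v ∈ S, f v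
    = ∑ B ∈ Finset.univ.powerset.filter (fun B : Finset (Fin n) => B.card = r),
        ∑ M ∈ bMatchings G B j, ∏ v ∈ B.filter (fun v => ¬∃ e ∈ M, v ∈ e), f v := by
  rw [Finset.sum_sigma', Finset.sum_sigma']
  refine Finset.sum_nbij' (fun a => ⟨a.2 ∪ a.1.support, medges a.1⟩)
    (fun b => ⟨mpermT G b.2, b.1 \ vtx b.2⟩) ?_ ?_ ?_ ?_ ?_
  · rintro ⟨τ, S⟩ ha
    dsimp only at ha ⊢
    rw [Finset.mem_sigma, Finset.mem_filter] at ha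
    obtain ⟨⟨-, hmove, hcard⟩, hS⟩ := ha
    dsimp only at hmove hcard hS
    rw [Finset.mem_powersetCard] at hS
    have hinv := invol_of_moves hG τ hmove
    have hadj : ∀ i, τ i ≠ i → G.Adj i (τ i) := fun i hi => (hmove i).resolve_left hi
    have hM := isMatch_medges (G := G) hinv hadj
    have hdisj : Disjoint S τ.support :=
      Finset.disjoint_left.mpr (fun v hv => by simpa using hS.1 hv)
    rw [Finset.mem_sigma, Finset.mem_filter, Finset.mem_powerset]
    refine ⟨⟨Finset.subset_univ _, ?_⟩, ?_⟩
    · rw [Finset.card_union_of_disjoint hdisj, hS.2, hcard]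
      omega
    · rw [mem_bMatchings]
      refine ⟨hM.1, ?_, ?_, hM.2⟩
      · have h3 := card_medges hinv hadj
        show (medges τ).card = j
        omega
      · intro e he v hv
        have hv' : v ∈ vtx (medges τ) := by
          rw [vtx, Finset.mem_filter]
          exact ⟨Finset.mem_univ v, e, he, hv⟩
        rw [vtx_medges hinv] at hv'
        exact Finset.mem_union_right _ hv'
  · rintro ⟨B, M⟩ hb
    dsimp only at hb ⊢
    rw [Finset.mem_sigma, Finset.mem_filter, Finset.mem_powerset] at hb
    obtain ⟨⟨-, hBcard⟩, hMmem⟩ := hb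
    dsimp only at hBcard hMmem
    rw [mem_bMatchings] at hMmem
    obtain ⟨hMe, hMcard, hMB, hMd⟩ := hMmem
    have hM : IsMatch G M := ⟨hMe, hMd⟩
    have hmp : mpermT G M = mperm M hM := dif_pos hM
    have hvB : vtx M ⊆ B := by
      intro v hv
      rw [vtx, Finset.mem_filter] at hv
      obtain ⟨-, e, he, hve⟩ := hv
      exact hMB e he v hve
    rw [Finset.mem_sigma, Finset.mem_filter]
    constructor
    · refine ⟨Finset.mem_univ _, ?_, ?_⟩
      · intro i
        rw [hmp]
        by_cases h : mperm M hM i = i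
        · exact Or.inl h
        · exact Or.inr (mperm_adj hM i h)
      · rw [hmp, support_mperm hM, card_vtx hM, hMcard]
    · rw [Finset.mem_powersetCard, hmp, support_mperm hM]
      constructor
      · intro v hv
        rw [Finset.mem_compl]
        exact (Finset.mem_sdiff.mp hv).2
      · rw [Finset.card_sdiff_of_subset hvB, hBcard, card_vtx hM, hMcard]
  · rintro ⟨τ, S⟩ ha
    dsimp only at ha ⊢
    rw [Finset.mem_sigma, Finset.mem_filter] at ha
    obtain ⟨⟨-, hmove, hcard⟩, hS⟩ := ha
    dsimp only at hmove hcard hS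
    rw [Finset.mem_powersetCard] at hS
    have hinv := invol_of_moves hG τ hmove
    have hadj : ∀ i, τ i ≠ i → G.Adj i (τ i) := fun i hi => (hmove i).resolve_left hi
    have hM := isMatch_medges (G := G) hinv hadj
    have h1 : mpermT G (medges τ) = τ := by
      rw [mpermT, dif_pos hM, mperm_medges hinv hadj]
    have h2 : (S ∪ τ.support) \ vtx (medges τ) = S := by
      rw [vtx_medges hinv, Finset.union_sdiff_distrib, Finset.sdiff_self, Finset.union_empty,
        Finset.sdiff_eq_self_of_disjoint]
      exact Finset.disjoint_left.mpr (fun v hv => by simpa using hS.1 hv)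
    exact Sigma.ext h1 (heq_of_eq h2)
  · rintro ⟨B, M⟩ hb
    dsimp only at hb ⊢
    rw [Finset.mem_sigma, Finset.mem_filter, Finset.mem_powerset] at hb
    obtain ⟨⟨-, hBcard⟩, hMmem⟩ := hb
    dsimp only at hBcard hMmem
    rw [mem_bMatchings] at hMmem
    obtain ⟨hMe, hMcard, hMB, hMd⟩ := hMmem
    have hM : IsMatch G M := ⟨hMe, hMd⟩
    have hmp : mpermT G M = mperm M hM := dif_pos hM
    have hvB : vtx M ⊆ B := by
      intro v hv
      rw [vtx, Finset.mem_filter] at hv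
      obtain ⟨-, e, he, hve⟩ := hv
      exact hMB e he v hve
    have h1 : (B \ vtx M) ∪ (mpermT G M).support = B := by
      rw [hmp, support_mperm hM, Finset.sdiff_union_of_subset hvB]
    have h2 : medges (mpermT G M) = M := by rw [hmp, medges_mperm hM]
    exact Sigma.ext h1 (heq_of_eq h2)
  · rintro ⟨τ, S⟩ ha
    dsimp only at ha ⊢
    rw [Finset.mem_sigma, Finset.mem_filter] at ha
    obtain ⟨⟨-, hmove, hcard⟩, hS⟩ := ha
    dsimp only at hmove hcard hS
    rw [Finset.mem_powersetCard] at hS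
    have hinv := invol_of_moves hG τ hmove
    show _ = ∏ v ∈ (S ∪ τ.support).filter (fun v => ¬∃ e ∈ medges τ, v ∈ e), f v
    rw [filter_not_vtx, vtx_medges hinv, Finset.union_sdiff_distrib, Finset.sdiff_self,
      Finset.union_empty, Finset.sdiff_eq_self_of_disjoint]
    exact Finset.disjoint_left.mpr (fun v hv => by simpa using hS.1 hv)
end matchstuff

/-- For a tree `T` on `[n]`, `λ ⊢ n` and `0 ≤ r ≤ n`, the coefficient
`c_{λ,r}(q) = (-1)^r [x^{n-r}] d_λ(xI - L^q_T)` equals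
`∑_{j=0}^{⌊r/2⌋} χ_λ(2^j 1^{n-2j}) m_{r,j}(q)`.  Here `σ j` is any
permutation of cycle type `2^j 1^{n-2j}`, and the immanantal polynomial is
computed over `(ℝ[q])[x]`. -/
theorem coeff_immanantal_qLap {n : ℕ} (G : SimpleGraph (Fin n)) [DecidableRel G.Adj]
    (hG : G.IsTree) (lam : Fin n → ℕ) (hlam : Antitone lam) (hsum : ∑ i, lam i = n)
    (r : ℕ) (hr : r ≤ n)
    (σ : ℕ → Equiv.Perm (Fin n))
    (hσ : ∀ j ≤ r / 2, (σ j).cycleType = Multiset.replicate j 2) :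
    (imman (fun τ => ((chiPart n lam τ : ℤ) : Polynomial (Polynomial ℝ)))
        (Matrix.scalar (Fin n) (X : Polynomial (Polynomial ℝ))
          - (qLap G (X : Polynomial ℝ)).map Polynomial.C)).coeff (n - r)
      = (-1 : Polynomial ℝ) ^ r *
          ∑ j ∈ Finset.range (r / 2 + 1),
            ((chiPart n lam (σ j) : ℤ) : Polynomial ℝ) * mrj G r j := by
  classical
  have hac := hG.IsAcyclic
  set dvf : Fin n → Polynomial ℝ :=
    fun v => 1 + (X : Polynomial ℝ) ^ 2 * ((G.degree v : Polynomial ℝ) - 1) with hdvf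
  set A : Matrix (Fin n) (Fin n) (Polynomial (Polynomial ℝ)) :=
    Matrix.scalar (Fin n) (X : Polynomial (Polynomial ℝ)) - (qLap G (X : Polynomial ℝ)).map C
    with hA
  have hAdiag : ∀ i, A i i = X - C (dvf i) := by
    intro i
    rw [hA]
    simp [Matrix.scalar_apply, Matrix.sub_apply, Matrix.map_apply, qLap, hdvf]
  have hAadj : ∀ i k, i ≠ k → G.Adj i k → A i k = C (X : Polynomial ℝ) := by
    intro i k hne hadj
    rw [hA]
    simp [Matrix.scalar_apply, Matrix.diagonal_apply_ne _ hne, Matrix.sub_apply,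
      Matrix.map_apply, qLap, hne, hadj]
  have hAnone : ∀ i k, i ≠ k → ¬G.Adj i k → A i k = 0 := by
    intro i k hne hadj
    rw [hA]
    simp [Matrix.scalar_apply, Matrix.diagonal_apply_ne _ hne, Matrix.sub_apply,
      Matrix.map_apply, qLap, hne, hadj]
  set Iset : Finset (Equiv.Perm (Fin n)) :=
    Finset.univ.filter (fun τ => ∀ i, τ i = i ∨ G.Adj i (τ i)) with hIset
  have hcardn : ∀ τ : Equiv.Perm (Fin n), τ.support.card ≤ n := by
    intro τ
    have := Finset.card_le_univ τ.support
    rwa [Fintype.card_fin] at this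
  simp only [imman]
  rw [← Finset.sum_subset (Finset.subset_univ Iset) (by
    intro τ _ hτ
    simp only [hIset, Finset.mem_filter, Finset.mem_univ, true_and, not_forall] at hτ
    obtain ⟨i, hi⟩ := hτ
    push_neg at hi
    rw [Finset.prod_eq_zero (Finset.mem_univ i)
      (hAnone i (τ i) (fun h => hi.1 h.symm) hi.2), mul_zero])]
  rw [Polynomial.finset_sum_coeff]
  have hval : ∀ τ ∈ Iset,
      (((chiPart n lam τ : ℤ) : Polynomial (Polynomial ℝ)) * ∏ i, A i (τ i)).coeff (n - r)
      = if τ.support.card ≤ r then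
          ((chiPart n lam τ : ℤ) : Polynomial ℝ) * (X : Polynomial ℝ) ^ (τ.support.card) *
            ((-1) ^ (r - τ.support.card) *
              ∑ S ∈ (τ.supportᶜ).powersetCard (r - τ.support.card), ∏ v ∈ S, dvf v)
        else 0 := by
    intro τ hτ
    have hmove : ∀ i, τ i = i ∨ G.Adj i (τ i) := by
      simpa [hIset] using hτ
    have hprod : ∏ i, A i (τ i)
        = C ((X : Polynomial ℝ) ^ (τ.support.card)) * ∏ i ∈ τ.supportᶜ, (X - C (dvf i)) := by
      rw [← Finset.prod_mul_prod_compl τ.support]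
      congr 1
      · rw [Finset.prod_congr rfl (fun i hi => hAadj i (τ i)
          (Ne.symm (Equiv.Perm.mem_support.mp hi))
          ((hmove i).resolve_left (Equiv.Perm.mem_support.mp hi))),
          Finset.prod_const, map_pow]
      · refine Finset.prod_congr rfl (fun i hi => ?_)
        have hfix : τ i = i := Equiv.Perm.notMem_support.mp (by simpa using hi)
        rw [hfix, hAdiag i]
    rw [hprod,
      show ((chiPart n lam τ : ℤ) : Polynomial (Polynomial ℝ))
        = C ((chiPart n lam τ : ℤ) : Polynomial ℝ) from
        (map_intCast (C : Polynomial ℝ →+* Polynomial (Polynomial ℝ)) _).symm,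
      ← mul_assoc, ← map_mul, Polynomial.coeff_C_mul]
    have hcompl : (τ.supportᶜ).card = n - τ.support.card := by
      rw [Finset.card_compl, Fintype.card_fin]
    by_cases hsr : τ.support.card ≤ r
    · rw [if_pos hsr]
      have hk : n - r ≤ (τ.supportᶜ).card := by
        rw [hcompl]
        have := hcardn τ
        omega
      rw [prod_X_sub_C_coeff' _ _ hk, hcompl,
        show n - τ.support.card - (n - r) = r - τ.support.card by
          have := hcardn τ
          omega]
    · rw [if_neg hsr]
      have hdeg : (∏ i ∈ τ.supportᶜ, (X - C (dvf i))).natDegree < n - r := by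
        rw [prod_X_sub_C_natDegree, hcompl]
        have := hcardn τ
        omega
      rw [Polynomial.coeff_eq_zero_of_natDegree_lt hdeg, mul_zero]
  rw [Finset.sum_congr rfl hval, ← Finset.sum_filter]
  have hmaps : ∀ τ ∈ Iset.filter (fun τ => τ.support.card ≤ r),
      τ.support.card / 2 ∈ Finset.range (r / 2 + 1) := by
    intro τ hτ
    rw [Finset.mem_filter] at hτ
    rw [Finset.mem_range]
    have := hτ.2
    omega
  rw [← Finset.sum_fiberwise_of_maps_to hmaps, Finset.mul_sum]
  refine Finset.sum_congr rfl fun j hj => ?_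
  have hj' : j ≤ r / 2 := by
    have := Finset.mem_range.mp hj
    omega
  have h2j : 2 * j ≤ r := by omega
  have hFj : (Iset.filter (fun τ => τ.support.card ≤ r)).filter
        (fun τ => τ.support.card / 2 = j)
      = Finset.univ.filter (fun τ : Equiv.Perm (Fin n) =>
          (∀ i, τ i = i ∨ G.Adj i (τ i)) ∧ τ.support.card = 2 * j) := by
    ext τ
    simp only [hIset, Finset.mem_filter, Finset.mem_univ, true_and]
    constructor
    · rintro ⟨⟨hmove, hle⟩, hdiv⟩
      have heven := (cycleType_of_invol τ (invol_of_moves hac τ hmove)).2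
      exact ⟨hmove, by omega⟩
    · rintro ⟨hmove, hcard⟩
      exact ⟨⟨hmove, by omega⟩, by omega⟩
  rw [hFj]
  have hterm : ∀ τ ∈ Finset.univ.filter (fun τ : Equiv.Perm (Fin n) =>
        (∀ i, τ i = i ∨ G.Adj i (τ i)) ∧ τ.support.card = 2 * j),
      ((chiPart n lam τ : ℤ) : Polynomial ℝ) * (X : Polynomial ℝ) ^ (τ.support.card) *
        ((-1) ^ (r - τ.support.card) *
          ∑ S ∈ (τ.supportᶜ).powersetCard (r - τ.support.card), ∏ v ∈ S, dvf v)
      = (((chiPart n lam (σ j) : ℤ) : Polynomial ℝ) * (X : Polynomial ℝ) ^ (2 * j)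
          * (-1) ^ r) *
        ∑ S ∈ (τ.supportᶜ).powersetCard (r - 2 * j), ∏ v ∈ S, dvf v := by
    intro τ hτ
    rw [Finset.mem_filter] at hτ
    obtain ⟨-, hmove, hcard⟩ := hτ
    have hinvτ := invol_of_moves hac τ hmove
    have hct : τ.cycleType = (σ j).cycleType := by
      rw [(cycleType_of_invol τ hinvτ).1, hcard, hσ j hj',
        Nat.mul_div_cancel_left j (by norm_num)]
    have hchi : chiPart n lam τ = chiPart n lam (σ j) := by
      unfold chiPart
      rw [hct]
    have hsign : ((-1 : Polynomial ℝ)) ^ (r - 2 * j) = (-1) ^ r := by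
      have h1 : ((-1 : Polynomial ℝ)) ^ (r - 2 * j) * ((-1) ^ 2) ^ j = (-1) ^ r := by
        rw [← pow_mul, ← pow_add]
        congr 1
        omega
      simpa using h1
    rw [hchi, hcard, hsign]
    ring
  rw [Finset.sum_congr rfl hterm, ← Finset.mul_sum,
    matching_sum_eq hac r j h2j dvf]
  simp only [mrj, mBj, hdvf]
  rw [Finset.sum_congr rfl (fun B (_ : B ∈ Finset.univ.powerset.filter
      (fun B : Finset (Fin n) => B.card = r)) => (Finset.mul_sum _ _ _).symm),
    ← Finset.mul_sum]
  ring
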